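/- Let K be a maximal chunk with at least one forward cluster and exactly two backward clusters with dictating writes w1, w2. In any viable total order T over all writes of K, w1 and w2 cannot both precede all writes of forward clusters of K, and they cannot both succeed all writes of forward clusters of K. -/

import Mathlib

open scoped Classical

/-- An operation on a single register. -/
structure Op where
  s : ℝ
  f : ℝ
  isRead : Bool
  val : ℕ

abbrev History := Finset Op

def Op.isWrite (op : Op) : Prop := op.isRead = false

/-- Well-formedness of a history: operations have positive duration, all endpoints
are distinct, writes have distinct values, and every read has a dictating write
that finishes before the read starts. -/
def Wf (H : History) : Prop :=
  (∀ op ∈ H, op.s < op.f) ∧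
  (∀ op1 ∈ H, ∀ op2 ∈ H, op1 ≠ op2 →
    op1.s ≠ op2.s ∧ op1.f ≠ op2.f ∧ op1.s ≠ op2.f) ∧
  (∀ w1 ∈ H, ∀ w2 ∈ H, w1.isWrite → w2.isWrite → w1.val = w2.val → w1 = w2) ∧
  (∀ r ∈ H, r.isRead = true → ∃ w ∈ H, w.isWrite ∧ w.val = r.val ∧ w.f < r.s)

/-- `a` occurs before `b` in the total order represented by the list `l`. -/
def Before (l : List Op) (a b : Op) : Prop :=
  ∃ l1 l2 l3, l = l1 ++ a :: l2 ++ b :: l3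

/-- A total order (list) is valid if it respects real-time precedence. -/
def Valid (l : List Op) : Prop :=
  ∀ a ∈ l, ∀ b ∈ l, a.f < b.s → Before l a b

/-- `l` is a total order on exactly the operations of `H`. -/
def IsLinearization (H : History) (l : List Op) : Prop :=
  l.Nodup ∧ ∀ op, op ∈ l ↔ op ∈ H

/-- In the total order `l`, every read follows its dictating write, separated from
it by at most `k - 1` other writes. -/
def KAtomicOrder (k : ℕ) (l : List Op) : Prop :=
  ∀ r ∈ l, r.isRead = true → ∀ w ∈ l, w.isWrite → w.val = r.val →
    ∃ l1 l2 l3, l = l1 ++ w :: l2 ++ r :: l3 ∧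
      (l2.filter (fun op => op.isRead = false)).length ≤ k - 1

/-- A history is `k`-atomic if it has a valid `k`-atomic total order. -/
def KAtomic (k : ℕ) (H : History) : Prop :=
  ∃ l, IsLinearization H l ∧ Valid l ∧ KAtomicOrder k l

/-- The cluster of a write `w`: the write together with its dictated reads. -/
noncomputable def cluster (H : History) (w : Op) : Finset Op :=
  insert w (H.filter (fun r => r.isRead = true ∧ r.val = w.val))

/-- Minimum finish time over the cluster of `w`. -/
noncomputable def fmin (H : History) (w : Op) : ℝ :=
  (cluster H w).inf' (Finset.insert_nonempty _ _) Op.f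

/-- Maximum start time over the cluster of `w`. -/
noncomputable def smax (H : History) (w : Op) : ℝ :=
  (cluster H w).sup' (Finset.insert_nonempty _ _) Op.s

/-- The zone of `w`'s cluster is forward if its minimum finish time is less than
its maximum start time. -/
def ForwardZone (H : History) (w : Op) : Prop := fmin H w < smax H w

/-- Low endpoint of the zone of `w`'s cluster. -/
noncomputable def zoneL (H : History) (w : Op) : ℝ := min (fmin H w) (smax H w)

/-- High endpoint of the zone of `w`'s cluster. -/
noncomputable def zoneH (H : History) (w : Op) : ℝ := max (fmin H w) (smax H w)

/-- The zone of `w`'s cluster, as a closed interval of time. -/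
noncomputable def zone (H : History) (w : Op) : Set ℝ := Set.Icc (zoneL H w) (zoneH H w)

/-- Union of the forward zones of the clusters (identified by their dictating
writes) in `K`. -/
def fwdUnion (H : History) (K : Finset Op) : Set ℝ :=
  ⋃ w ∈ {w ∈ (K : Set Op) | ForwardZone H w}, zone H w

/-- Union of the backward zones of the clusters in `K`. -/
def bwdUnion (H : History) (K : Finset Op) : Set ℝ :=
  ⋃ w ∈ {w ∈ (K : Set Op) | ¬ ForwardZone H w}, zone H w

/-- A chunk: a set of clusters (identified by their dictating writes) whose
forward zones union to a continuous nonempty time interval containing the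
union of the chunk's backward zones. -/
def IsChunk (H : History) (K : Finset Op) : Prop :=
  (∀ w ∈ K, w ∈ H ∧ w.isWrite) ∧
  (fwdUnion H K).Nonempty ∧ (fwdUnion H K).OrdConnected ∧
  bwdUnion H K ⊆ fwdUnion H K

/-- A maximal chunk: no further cluster can be added while remaining a chunk. -/
def MaximalChunk (H : History) (K : Finset Op) : Prop :=
  IsChunk H K ∧ ∀ w ∈ H, w.isWrite → w ∉ K → ¬ IsChunk H (insert w K)

/-- A chunk set of `H`: a set of maximal chunks covering every forward cluster. -/
def ChunkSet (H : History) (CS : Finset (Finset Op)) : Prop :=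
  (∀ K ∈ CS, MaximalChunk H K) ∧
  ∀ w ∈ H, w.isWrite → ForwardZone H w → ∃ K ∈ CS, w ∈ K

/-- The projection `H|K` of `H` onto the chunk `K`: all operations of clusters in `K`. -/
noncomputable def proj (H : History) (K : Finset Op) : History :=
  H.filter (fun op => ∃ w ∈ K, op ∈ cluster H w)

/-- A total order `T` on a set of writes is viable if it extends to a valid total
order `T'` on those writes together with all their dictated reads in `H`, in which
every read follows its dictating write with at most one other write in between. -/
def Viable (H : History) (T : List Op) : Prop :=
  ∃ T' : List Op, T'.Nodup ∧
    (∀ op, op ∈ T' ↔ op ∈ T ∨ (op ∈ H ∧ op.isRead = true ∧ ∃ w ∈ T, w.val = op.val)) ∧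
    Valid T' ∧ T'.filter (fun op => op.isRead = false) = T ∧ KAtomicOrder 2 T'

/-- `T` is a valid total order on exactly the writes in `K`. -/
def TotalOrderOn (K : Finset Op) (T : List Op) : Prop :=
  T.Nodup ∧ (∀ w, w ∈ T ↔ w ∈ K) ∧ Valid T


section ListHelpers

lemma list_split_of_getElem? {l : List Op} {i : ℕ} {a : Op} (h : l[i]? = some a) :
    l = l.take i ++ a :: l.drop (i+1) := by
  have hi : i < l.length := (List.getElem?_eq_some_iff.1 h).1
  have := List.drop_eq_getElem_cons hi
  rw [List.getElem?_eq_some_iff] at h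
  obtain ⟨_, rfl⟩ := h
  rw [← this, List.take_append_drop]

lemma before_iff_getElem? (l : List Op) (a b : Op) :
    Before l a b ↔ ∃ i j : ℕ, i < j ∧ l[i]? = some a ∧ l[j]? = some b := by
  constructor
  · rintro ⟨l1, l2, l3, rfl⟩
    have hL : l1 ++ a :: l2 ++ b :: l3 = l1 ++ (a :: (l2 ++ b :: l3)) := by simp
    rw [hL]
    have h1 : (l1 ++ a :: (l2 ++ b :: l3))[l1.length]? = some a := by
      rw [List.getElem?_append_right (l₁ := l1) le_rfl]
      simp
    have h2 : (l1 ++ a :: (l2 ++ b :: l3))[l1.length + l2.length + 1]? = some b := by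
      rw [List.getElem?_append_right (l₁ := l1) (by omega)]
      have he : l1.length + l2.length + 1 - l1.length = l2.length + 1 := by omega
      rw [he]
      rw [List.getElem?_cons_succ, List.getElem?_append_right (l₁ := l2) le_rfl]
      simp
    exact ⟨l1.length, l1.length + l2.length + 1, by omega, h1, h2⟩
  · rintro ⟨i, j, hij, ha, hb⟩
    have h1 := list_split_of_getElem? ha
    have hj : j < l.length := (List.getElem?_eq_some_iff.1 hb).1
    have hb' : (l.drop (i+1))[j - i - 1]? = some b := by
      rw [List.getElem?_drop]
      have : i + 1 + (j - i - 1) = j := by omega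
      rw [this]; exact hb
    have h2 := list_split_of_getElem? hb'
    refine ⟨l.take i, (l.drop (i+1)).take (j-i-1), (l.drop (i+1)).drop (j-i-1+1), ?_⟩
    conv_lhs => rw [h1, h2]
    simp

lemma nodup_getElem?_inj {l : List Op} (h : l.Nodup) {i j : ℕ} {a : Op}
    (hi : l[i]? = some a) (hj : l[j]? = some a) : i = j := by
  obtain ⟨hi1, hi2⟩ := List.getElem?_eq_some_iff.1 hi
  obtain ⟨hj1, hj2⟩ := List.getElem?_eq_some_iff.1 hj
  exact List.Nodup.getElem_inj_iff h |>.1 (hi2.trans hj2.symm)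

lemma before_asymm {l : List Op} (h : l.Nodup) {a b : Op}
    (h1 : Before l a b) (h2 : Before l b a) : False := by
  rw [before_iff_getElem?] at h1 h2
  obtain ⟨i, j, hij, ha, hb⟩ := h1
  obtain ⟨i', j', hij', hb', ha'⟩ := h2
  have := nodup_getElem?_inj h ha ha'
  have := nodup_getElem?_inj h hb hb'
  omega

lemma before_trans {l : List Op} (h : l.Nodup) {a b c : Op}
    (h1 : Before l a b) (h2 : Before l b c) : Before l a c := by
  rw [before_iff_getElem?] at h1 h2 ⊢
  obtain ⟨i, j, hij, ha, hb⟩ := h1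
  obtain ⟨i', j', hij', hb', hc⟩ := h2
  have := nodup_getElem?_inj h hb hb'
  exact ⟨i, j', by omega, ha, hc⟩

lemma before_total {l : List Op} (h : l.Nodup) {a b : Op}
    (ha : a ∈ l) (hb : b ∈ l) (hab : a ≠ b) : Before l a b ∨ Before l b a := by
  obtain ⟨i, hi, hia⟩ := List.mem_iff_getElem.1 ha
  obtain ⟨j, hj, hjb⟩ := List.mem_iff_getElem.1 hb
  have hia' : l[i]? = some a := List.getElem?_eq_some_iff.2 ⟨hi, hia⟩
  have hjb' : l[j]? = some b := List.getElem?_eq_some_iff.2 ⟨hj, hjb⟩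
  have hij : i ≠ j := by rintro rfl; exact hab (by rw [← hia, hjb])
  rcases lt_or_gt_of_ne hij with h' | h'
  · exact Or.inl ((before_iff_getElem? _ _ _).2 ⟨i, j, h', hia', hjb'⟩)
  · exact Or.inr ((before_iff_getElem? _ _ _).2 ⟨j, i, h', hjb', hia'⟩)

lemma before_mem_left {l : List Op} {a b : Op} (h : Before l a b) : a ∈ l := by
  obtain ⟨l1, l2, l3, rfl⟩ := h; simp

lemma before_mem_right {l : List Op} {a b : Op} (h : Before l a b) : b ∈ l := by
  obtain ⟨l1, l2, l3, rfl⟩ := h; simp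

lemma before_ne {l : List Op} (h : l.Nodup) {a b : Op} (hab : Before l a b) : a ≠ b := by
  rintro rfl
  exact before_asymm h hab hab

lemma before_filter {l : List Op} {p : Op → Bool} {a b : Op}
    (ha : p a) (hb : p b) (h : Before l a b) : Before (l.filter p) a b := by
  obtain ⟨l1, l2, l3, rfl⟩ := h
  refine ⟨l1.filter p, l2.filter p, l3.filter p, ?_⟩
  simp [List.filter_append, List.filter_cons, ha, hb]

lemma before_of_before_filter {l : List Op} (h : l.Nodup) {p : Op → Bool} {a b : Op}
    (hf : Before (l.filter p) a b) : Before l a b := by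
  have hnf : (l.filter p).Nodup := h.filter p
  have ha : a ∈ l := List.mem_of_mem_filter (before_mem_left hf)
  have hb : b ∈ l := List.mem_of_mem_filter (before_mem_right hf)
  have hpa : p a := List.of_mem_filter (before_mem_left hf)
  have hpb : p b := List.of_mem_filter (before_mem_right hf)
  rcases before_total h ha hb (before_ne hnf hf) with h' | h'
  · exact h'
  · exact absurd (before_filter hpb hpa h') (fun hh => before_asymm hnf hf hh)

lemma mem_middle_of_between {l : List Op} (h : l.Nodup) {l1 l2 l3 : List Op} {w r x : Op}
    (hL : l = l1 ++ w :: l2 ++ r :: l3) (h1 : Before l w x) (h2 : Before l x r) : x ∈ l2 := by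
  have hw : l[l1.length]? = some w := by
    rw [hL]
    have hA : l1 ++ w :: l2 ++ r :: l3 = l1 ++ (w :: (l2 ++ r :: l3)) := by simp
    rw [hA, List.getElem?_append_right (l₁ := l1) le_rfl]
    simp
  have hr : l[l1.length + l2.length + 1]? = some r := by
    rw [hL, List.getElem?_append_right (l₁ := l1 ++ w :: l2) (by simp; omega)]
    have : l1.length + l2.length + 1 - (l1 ++ w :: l2).length = 0 := by simp
    rw [this]
    simp
  rw [before_iff_getElem?] at h1 h2
  obtain ⟨i, j, hij, hw', hx⟩ := h1
  obtain ⟨i', j', hij', hx', hr'⟩ := h2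
  have e1 : i = l1.length := nodup_getElem?_inj h hw' hw
  have e2 : j' = l1.length + l2.length + 1 := nodup_getElem?_inj h hr' hr
  have e3 : j = i' := nodup_getElem?_inj h hx hx'
  have hjl : l1.length < j := by omega
  have hjr : j < l1.length + l2.length + 1 := by omega
  have hx2 : (l1 ++ (w :: (l2 ++ r :: l3)))[j]? = some x := by
    have hA : l1 ++ w :: l2 ++ r :: l3 = l1 ++ (w :: (l2 ++ r :: l3)) := by simp
    rw [hL, hA] at hx; exact hx
  rw [List.getElem?_append_right (l₁ := l1) (by omega)] at hx2
  obtain ⟨k, hk⟩ : ∃ k, j - l1.length = k + 1 := ⟨j - l1.length - 1, by omega⟩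
  rw [hk, List.getElem?_cons_succ] at hx2
  rw [List.getElem?_append_left (by omega)] at hx2
  exact List.mem_of_getElem? hx2

lemma two_le_length_of_two_mem {l : List Op} {a b : Op} (ha : a ∈ l) (hb : b ∈ l)
    (hab : a ≠ b) : 2 ≤ l.length := by
  obtain ⟨s, t, rfl⟩ := List.append_of_mem ha
  have : b ∈ s ++ t := by
    rcases List.mem_append.1 hb with h | h
    · exact List.mem_append.2 (Or.inl h)
    · rcases List.mem_cons.1 h with h | h
      · exact absurd h.symm hab
      · exact List.mem_append.2 (Or.inr h)
  have := List.length_pos_iff.2 (List.ne_nil_of_mem this)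
  simp at this ⊢
  omega

end ListHelpers

section ClusterHelpers

lemma mem_cluster {H : History} {w x : Op} :
    x ∈ cluster H w ↔ x = w ∨ (x ∈ H ∧ x.isRead = true ∧ x.val = w.val) := by
  simp [cluster, Finset.mem_insert, Finset.mem_filter]

lemma mem_of_cluster {H : History} {w x : Op} (hw : w ∈ H) (h : x ∈ cluster H w) : x ∈ H := by
  rcases mem_cluster.1 h with rfl | ⟨h1, _, _⟩
  · exact hw
  · exact h1

lemma fmin_attained (H : History) (w : Op) : ∃ a ∈ cluster H w, fmin H w = a.f :=
  Finset.exists_mem_eq_inf' _ Op.f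

lemma smax_attained (H : History) (w : Op) : ∃ a ∈ cluster H w, smax H w = a.s :=
  Finset.exists_mem_eq_sup' _ Op.s

lemma cluster_ne {H : History} (hWf : Wf H) {w w' : Op} (hw : w ∈ H) (hw' : w' ∈ H)
    (hwW : w.isWrite) (hw'W : w'.isWrite) (hne : w ≠ w') {a b : Op}
    (ha : a ∈ cluster H w) (hb : b ∈ cluster H w') : a ≠ b := by
  have hval : w.val ≠ w'.val := fun h => hne (hWf.2.2.1 w hw w' hw' hwW hw'W h)
  rcases mem_cluster.1 ha with rfl | ⟨_, har, hav⟩ <;>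
    rcases mem_cluster.1 hb with rfl | ⟨_, hbr, hbv⟩
  · exact hne
  · rintro rfl; rw [Op.isWrite] at hwW; rw [hwW] at hbr; exact Bool.noConfusion hbr
  · rintro rfl; rw [Op.isWrite] at hw'W; rw [hw'W] at har; exact Bool.noConfusion har
  · rintro rfl; rw [hav] at hbv; exact hval hbv

end ClusterHelpers

lemma main_lemma (H : History) (hWf : Wf H) (K : Finset Op) (hK : MaximalChunk H K)
    (w1 w2 : Op) (h12 : w1 ≠ w2) (hw1K : w1 ∈ K) (hw2K : w2 ∈ K)
    (hnf1 : ¬ ForwardZone H w1) (hnf2 : ¬ ForwardZone H w2)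
    (T : List Op) (hT : TotalOrderOn K T) (hV : Viable H T)
    (hord : Before T w1 w2) :
    (¬ ∀ w ∈ K, ForwardZone H w → Before T w1 w ∧ Before T w2 w) ∧
    (¬ ∀ w ∈ K, ForwardZone H w → Before T w w1 ∧ Before T w w2) := by
  obtain ⟨hndT, hmemT, hvalT⟩ := hT
  obtain ⟨T', hnd', hmem', hval', hfilter, hkat⟩ := hV
  obtain ⟨⟨hKH, hne, hconn, hbsub⟩, -⟩ := hK
  have h1H : w1 ∈ H := (hKH w1 hw1K).1
  have h2H : w2 ∈ H := (hKH w2 hw2K).1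
  have h1W : w1.isWrite := (hKH w1 hw1K).2
  have h2W : w2.isWrite := (hKH w2 hw2K).2
  have hw1T : w1 ∈ T := (hmemT w1).2 hw1K
  have hw2T : w2 ∈ T := (hmemT w2).2 hw2K
  have hw1T' : w1 ∈ T' := (hmem' w1).2 (Or.inl hw1T)
  have hw2T' : w2 ∈ T' := (hmem' w2).2 (Or.inl hw2T)
  have hTT' : ∀ x y : Op, Before T x y → Before T' x y := by
    intro x y hxy
    rw [← hfilter] at hxy
    exact before_of_before_filter hnd' hxy
  have hT'T : ∀ x y : Op, x.isWrite → y.isWrite → Before T' x y → Before T x y := by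
    intro x y hx hy hxy
    rw [← hfilter]
    exact before_filter (by simpa [Op.isWrite] using hx) (by simpa [Op.isWrite] using hy) hxy
  have hord' : Before T' w1 w2 := hTT' _ _ hord
  constructor
  · intro habs
    -- use the low endpoint of w1's backward zone
    have hz1 : zoneL H w1 ∈ zone H w1 := Set.mem_Icc.2 ⟨le_refl _, min_le_max⟩
    have hz2 : zoneL H w1 ∈ bwdUnion H K := by
      refine Set.mem_biUnion ?_ hz1
      exact ⟨hw1K, hnf1⟩
    have hz3 := hbsub hz2
    simp only [fwdUnion, Set.mem_iUnion, Set.mem_setOf_eq, Finset.mem_coe, exists_prop] at hz3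
    obtain ⟨w, ⟨hwK, hwF⟩, hzlw⟩ := hz3
    have hwH : w ∈ H := (hKH w hwK).1
    have hwW : w.isWrite := (hKH w hwK).2
    have hwT : w ∈ T := (hmemT w).2 hwK
    have hwT' : w ∈ T' := (hmem' w).2 (Or.inl hwT)
    have hwne : w ≠ w1 := fun h => hnf1 (h ▸ hwF)
    have hle : fmin H w ≤ smax H w1 := by
      have hzl : zoneL H w = fmin H w := min_eq_left (le_of_lt hwF)
      have h2 : zoneL H w1 ≤ smax H w1 := min_le_right _ _
      have h3 := (Set.mem_Icc.1 hzlw).1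
      rw [hzl] at h3
      linarith
    obtain ⟨a, haC, hfa⟩ := fmin_attained H w
    obtain ⟨b, hbC, hsb⟩ := smax_attained H w1
    have habne : a ≠ b := cluster_ne hWf hwH h1H hwW h1W hwne haC hbC
    have haH : a ∈ H := mem_of_cluster hwH haC
    have hbH : b ∈ H := mem_of_cluster h1H hbC
    have hafbs : a.f < b.s := by
      refine lt_of_le_of_ne ?_ (Ne.symm (hWf.2.1 b hbH a haH habne.symm).2.2)
      rw [← hfa, ← hsb]; exact hle
    have haT' : a ∈ T' := by
      rcases mem_cluster.1 haC with rfl | ⟨hH, hr, hv⟩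
      · exact hwT'
      · exact (hmem' a).2 (Or.inr ⟨hH, hr, w, hwT, hv.symm⟩)
    have hbT' : b ∈ T' := by
      rcases mem_cluster.1 hbC with rfl | ⟨hH, hr, hv⟩
      · exact hw1T'
      · exact (hmem' b).2 (Or.inr ⟨hH, hr, w1, hw1T, hv.symm⟩)
    have hab' : Before T' a b := hval' a haT' b hbT' hafbs
    have hwb : Before T' w b := by
      rcases mem_cluster.1 haC with rfl | ⟨hH, hr, hv⟩
      · exact hab'
      · obtain ⟨m1, m2, m3, heq, -⟩ := hkat a haT' hr w hwT' hwW hv.symm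
        exact before_trans hnd' ⟨m1, m2, m3, heq⟩ hab'
    rcases mem_cluster.1 hbC with rfl | ⟨hbHH, hbr, hbv⟩
    · exact before_asymm hndT ((habs w hwK hwF).1) (hT'T w b hwW h1W hwb)
    · obtain ⟨m1, m2, m3, heq, hlen⟩ := hkat b hbT' hbr w1 hw1T' h1W hbv.symm
      have hw2w' : Before T' w2 w := hTT' _ _ (habs w hwK hwF).2
      have hw2m : w2 ∈ m2 :=
        mem_middle_of_between hnd' heq hord' (before_trans hnd' hw2w' hwb)
      have hwm : w ∈ m2 :=
        mem_middle_of_between hnd' heq (before_trans hnd' hord' hw2w') hwb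
      have hww2 : w2 ≠ w := fun h => hnf2 (h ▸ hwF)
      have hm1 : w2 ∈ m2.filter (fun op => op.isRead = false) :=
        List.mem_filter.2 ⟨hw2m, by simpa [Op.isWrite] using h2W⟩
      have hm2 : w ∈ m2.filter (fun op => op.isRead = false) :=
        List.mem_filter.2 ⟨hwm, by simpa [Op.isWrite] using hwW⟩
      have := two_le_length_of_two_mem hm1 hm2 hww2
      omega
  · intro habs
    -- use the high endpoint of w2's backward zone
    have hz1 : zoneH H w2 ∈ zone H w2 := Set.mem_Icc.2 ⟨min_le_max, le_refl _⟩
    have hz2 : zoneH H w2 ∈ bwdUnion H K := by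
      refine Set.mem_biUnion ?_ hz1
      exact ⟨hw2K, hnf2⟩
    have hz3 := hbsub hz2
    simp only [fwdUnion, Set.mem_iUnion, Set.mem_setOf_eq, Finset.mem_coe, exists_prop] at hz3
    obtain ⟨w, ⟨hwK, hwF⟩, hzlw⟩ := hz3
    have hwH : w ∈ H := (hKH w hwK).1
    have hwW : w.isWrite := (hKH w hwK).2
    have hwT : w ∈ T := (hmemT w).2 hwK
    have hwT' : w ∈ T' := (hmem' w).2 (Or.inl hwT)
    have hwne : w2 ≠ w := fun h => hnf2 (h ▸ hwF)
    have hle : fmin H w2 ≤ smax H w := by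
      have hzh : zoneH H w = smax H w := max_eq_right (le_of_lt hwF)
      have h2 : fmin H w2 ≤ zoneH H w2 := le_max_left _ _
      have h3 := (Set.mem_Icc.1 hzlw).2
      rw [hzh] at h3
      linarith
    obtain ⟨a, haC, hfa⟩ := fmin_attained H w2
    obtain ⟨b, hbC, hsb⟩ := smax_attained H w
    have habne : a ≠ b := cluster_ne hWf h2H hwH h2W hwW hwne haC hbC
    have haH : a ∈ H := mem_of_cluster h2H haC
    have hbH : b ∈ H := mem_of_cluster hwH hbC
    have hafbs : a.f < b.s := by
      refine lt_of_le_of_ne ?_ (Ne.symm (hWf.2.1 b hbH a haH habne.symm).2.2)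
      rw [← hfa, ← hsb]; exact hle
    have haT' : a ∈ T' := by
      rcases mem_cluster.1 haC with rfl | ⟨hH, hr, hv⟩
      · exact hw2T'
      · exact (hmem' a).2 (Or.inr ⟨hH, hr, w2, hw2T, hv.symm⟩)
    have hbT' : b ∈ T' := by
      rcases mem_cluster.1 hbC with rfl | ⟨hH, hr, hv⟩
      · exact hwT'
      · exact (hmem' b).2 (Or.inr ⟨hH, hr, w, hwT, hv.symm⟩)
    have hab' : Before T' a b := hval' a haT' b hbT' hafbs
    have hw2b : Before T' w2 b := by
      rcases mem_cluster.1 haC with rfl | ⟨hH, hr, hv⟩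
      · exact hab'
      · obtain ⟨m1, m2, m3, heq, -⟩ := hkat a haT' hr w2 hw2T' h2W hv.symm
        exact before_trans hnd' ⟨m1, m2, m3, heq⟩ hab'
    rcases mem_cluster.1 hbC with rfl | ⟨hbHH, hbr, hbv⟩
    · exact before_asymm hndT ((habs b hwK hwF).2) (hT'T w2 b h2W hwW hw2b)
    · obtain ⟨m1, m2, m3, heq, hlen⟩ := hkat b hbT' hbr w hwT' hwW hbv.symm
      have hww1' : Before T' w w1 := hTT' _ _ (habs w hwK hwF).1
      have hw1m : w1 ∈ m2 :=
        mem_middle_of_between hnd' heq hww1'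
          (before_trans hnd' hord' hw2b)
      have hw2m : w2 ∈ m2 :=
        mem_middle_of_between hnd' heq (before_trans hnd' hww1' hord') hw2b
      have hm1 : w1 ∈ m2.filter (fun op => op.isRead = false) :=
        List.mem_filter.2 ⟨hw1m, by simpa [Op.isWrite] using h1W⟩
      have hm2 : w2 ∈ m2.filter (fun op => op.isRead = false) :=
        List.mem_filter.2 ⟨hw2m, by simpa [Op.isWrite] using h2W⟩
      have := two_le_length_of_two_mem hm1 hm2 h12
      omega



/-- Let `K` be a maximal chunk with at least one forward cluster and exactly two
backward clusters, with dictating writes `w1, w2`. In any viable total order over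
all writes of `K`, `w1` and `w2` cannot both precede all writes of forward
clusters of `K`, and cannot both succeed all of them. -/
theorem stmt_7 (H : History) (hWf : Wf H) (K : Finset Op) (hK : MaximalChunk H K)
    (w1 w2 : Op) (h12 : w1 ≠ w2) (hw1K : w1 ∈ K) (hw2K : w2 ∈ K)
    (hb : K.filter (fun w => ¬ ForwardZone H w) = {w1, w2})
    (hfwd : ∃ w ∈ K, ForwardZone H w)
    (T : List Op) (hT : TotalOrderOn K T) (hV : Viable H T) :
    (¬ ∀ w ∈ K, ForwardZone H w → Before T w1 w ∧ Before T w2 w) ∧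
    (¬ ∀ w ∈ K, ForwardZone H w → Before T w w1 ∧ Before T w w2) := by
  have hnf1 : ¬ ForwardZone H w1 := by
    have : w1 ∈ K.filter (fun w => ¬ ForwardZone H w) := by
      rw [hb]; exact Finset.mem_insert_self _ _
    exact (Finset.mem_filter.1 this).2
  have hnf2 : ¬ ForwardZone H w2 := by
    have : w2 ∈ K.filter (fun w => ¬ ForwardZone H w) := by
      rw [hb]; exact Finset.mem_insert_of_mem (Finset.mem_singleton_self _)
    exact (Finset.mem_filter.1 this).2
  have hw1T : w1 ∈ T := (hT.2.1 w1).2 hw1K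
  have hw2T : w2 ∈ T := (hT.2.1 w2).2 hw2K
  rcases before_total hT.1 hw1T hw2T h12 with hord | hord
  · exact main_lemma H hWf K hK w1 w2 h12 hw1K hw2K hnf1 hnf2 T hT hV hord
  · have hm := main_lemma H hWf K hK w2 w1 h12.symm hw2K hw1K hnf2 hnf1 T hT hV hord
    constructor
    · intro habs
      exact hm.1 (fun w hw hf => ⟨(habs w hw hf).2, (habs w hw hf).1⟩)
    · intro habs
      exact hm.2 (fun w hw hf => ⟨(habs w hw hf).2, (habs w hw hf).1⟩)
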